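/- Let W_s(x,y) = α_s x + β_s y for s = 0,…,l with real coefficients, let κ_s > 0, and set c = Σ_s κ_s e^{W_s}. Define I(φ) = max_s (α_s cos φ + β_s sin φ). If I(φ) ≥ 0 for all φ ∈ [0, 2π), then the function c^{-1/2} is bounded on ℝ². If moreover I(φ) > 0 for all φ, then c^{-1/2}(x,y) → 0 as x² + y² → ∞. -/

import Mathlib

noncomputable section
open Filter

private lemma sqrt_tendsto_atTop : Tendsto Real.sqrt atTop atTop := by
  apply tendsto_atTop_atTop_of_monotone (fun a b h => Real.sqrt_le_sqrt h)
  intro b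
  exact ⟨b ^ 2, by rw [Real.sqrt_sq_eq_abs]; exact le_abs_self b⟩

/-- Lump-type fields: for `c = Σ_s κ_s e^{α_s x + β_s y}` with `κ_s > 0`, if the tropical
maximum `I(φ) = max_s (α_s cos φ + β_s sin φ)` is nonnegative for all directions then
`c^{-1/2}` is bounded on `ℝ²`; if it is strictly positive for all directions then
`c^{-1/2} → 0` at infinity. -/
theorem lump_c_inv_sqrt_bounded_and_decay
    (l : ℕ) (α β κ : Fin (l + 1) → ℝ) (hκ : ∀ s, 0 < κ s) :
    (let c : ℝ → ℝ → ℝ := fun x y => ∑ s, κ s * Real.exp (α s * x + β s * y)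
     let Itrop : ℝ → ℝ := fun φ => ⨆ s, (α s * Real.cos φ + β s * Real.sin φ)
     ((∀ φ, 0 ≤ Itrop φ) → ∃ M : ℝ, ∀ x y, (Real.sqrt (c x y))⁻¹ ≤ M) ∧
     ((∀ φ, 0 < Itrop φ) →
       Tendsto (fun p : ℝ × ℝ => (Real.sqrt (c p.1 p.2))⁻¹) (cocompact (ℝ × ℝ)) (nhds 0))) := by
  intro c Itrop
  -- minimum of κ
  obtain ⟨s₀, hs₀⟩ : ∃ s₀, ∀ s, κ s₀ ≤ κ s := by
    obtain ⟨s₀, -, h⟩ := Finset.exists_min_image Finset.univ κ ⟨0, Finset.mem_univ 0⟩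
    exact ⟨s₀, fun s => h s (Finset.mem_univ s)⟩
  set m : ℝ := κ s₀ with hm
  have hm0 : 0 < m := hκ s₀
  -- lower bound for c by single terms
  have hterm : ∀ x y s, κ s * Real.exp (α s * x + β s * y) ≤ c x y := by
    intro x y s
    exact Finset.single_le_sum (f := fun i => κ i * Real.exp (α i * x + β i * y))
      (fun i _ => le_of_lt (mul_pos (hκ i) (Real.exp_pos _))) (Finset.mem_univ s)
  -- key: c x y ≥ m * exp (Itrop (arg (x+iy)) * |x+iy|)
  have key : ∀ x y : ℝ, m * Real.exp (Itrop (Complex.arg ⟨x, y⟩) * ‖(⟨x, y⟩ : ℂ)‖)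
      ≤ c x y := by
    intro x y
    set z : ℂ := ⟨x, y⟩ with hz
    set φ := Complex.arg z with hφ
    obtain ⟨s, hs⟩ : ∃ s, α s * Real.cos φ + β s * Real.sin φ = Itrop φ :=
      exists_eq_ciSup_of_finite
    have hxy : α s * x + β s * y = Itrop φ * ‖z‖ := by
      have hx : ‖z‖ * Real.cos φ = x := Complex.norm_mul_cos_arg z
      have hy : ‖z‖ * Real.sin φ = y := Complex.norm_mul_sin_arg z
      rw [← hx, ← hy, ← hs]; ring
    calc m * Real.exp (Itrop φ * ‖z‖)
        ≤ κ s * Real.exp (α s * x + β s * y) := by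
          rw [hxy]; exact mul_le_mul_of_nonneg_right (hs₀ s) (Real.exp_pos _).le
      _ ≤ c x y := hterm x y s
  have hcpos : ∀ x y, 0 < c x y :=
    fun x y => lt_of_lt_of_le (mul_pos hm0 (Real.exp_pos _)) (key x y)
  constructor
  · -- bounded case
    intro hI
    refine ⟨(Real.sqrt m)⁻¹, fun x y => ?_⟩
    have hmc : m ≤ c x y := by
      have := key x y
      have h1 : m * 1 ≤ m * Real.exp (Itrop (Complex.arg ⟨x, y⟩) * ‖(⟨x, y⟩ : ℂ)‖) := by
        apply mul_le_mul_of_nonneg_left _ hm0.le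
        rw [← Real.exp_zero]
        exact Real.exp_le_exp.2 (mul_nonneg (hI _) (norm_nonneg _))
      linarith
    have := Real.sqrt_le_sqrt hmc
    exact inv_anti₀ (Real.sqrt_pos.2 hm0) this
  · -- decay case
    intro hI
    -- minimum of Itrop over [-π, π]
    have hIc : Continuous Itrop := by
      have : Itrop = fun φ => Finset.univ.sup' Finset.univ_nonempty
          (fun s => fun φ => α s * Real.cos φ + β s * Real.sin φ) φ := by
        funext φ
        rw [show (Finset.univ.sup' Finset.univ_nonempty
            (fun s => fun φ => α s * Real.cos φ + β s * Real.sin φ)) φ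
            = Finset.univ.sup' Finset.univ_nonempty
              (fun s => α s * Real.cos φ + β s * Real.sin φ) from
          Finset.sup'_apply _ _ _, Finset.sup'_univ_eq_ciSup]
      rw [this]
      exact Continuous.finset_sup' Finset.univ_nonempty fun i _ =>
        ((continuous_const.mul Real.continuous_cos).add
          (continuous_const.mul Real.continuous_sin))
    obtain ⟨φ₀, -, hφ₀⟩ := (isCompact_Icc (a := -Real.pi) (b := Real.pi)).exists_isMinOn
      (Set.nonempty_Icc.2 (by linarith [Real.pi_pos])) hIc.continuousOn
    set ε := Itrop φ₀ with hε
    have hε0 : 0 < ε := hI φ₀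
    -- lower bound c in terms of the product norm
    have hlow : ∀ p : ℝ × ℝ, m * Real.exp (ε * ‖p‖) ≤ c p.1 p.2 := by
      rintro ⟨x, y⟩
      refine le_trans ?_ (key x y)
      apply mul_le_mul_of_nonneg_left _ hm0.le
      apply Real.exp_le_exp.2
      have harg : Complex.arg ⟨x, y⟩ ∈ Set.Icc (-Real.pi) Real.pi :=
        ⟨(Complex.neg_pi_lt_arg _).le, Complex.arg_le_pi _⟩
      have h1 : ε ≤ Itrop (Complex.arg ⟨x, y⟩) := hφ₀ harg
      have h2 : ‖((x, y) : ℝ × ℝ)‖ ≤ ‖(⟨x, y⟩ : ℂ)‖ := by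
        rw [Prod.norm_def]
        apply max_le
        · simpa using Complex.abs_re_le_norm ⟨x, y⟩
        · simpa using Complex.abs_im_le_norm ⟨x, y⟩
      calc ε * ‖((x, y) : ℝ × ℝ)‖ ≤ ε * ‖(⟨x, y⟩ : ℂ)‖ :=
            mul_le_mul_of_nonneg_left h2 hε0.le
        _ ≤ Itrop (Complex.arg ⟨x, y⟩) * ‖(⟨x, y⟩ : ℂ)‖ :=
            mul_le_mul_of_nonneg_right h1 (norm_nonneg _)
    -- squeeze
    have hbnd : Tendsto (fun p : ℝ × ℝ => (Real.sqrt (m * Real.exp (ε * ‖p‖)))⁻¹)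
        (cocompact (ℝ × ℝ)) (nhds 0) := by
      apply Tendsto.inv_tendsto_atTop
      apply sqrt_tendsto_atTop.comp
      apply (tendsto_const_mul_atTop_of_pos hm0).2
      exact Real.tendsto_exp_atTop.comp
        ((tendsto_const_mul_atTop_of_pos hε0).2 tendsto_norm_cocompact_atTop)
    apply squeeze_zero (fun p => inv_nonneg.2 (Real.sqrt_nonneg _)) _ hbnd
    intro p
    exact inv_anti₀
      (Real.sqrt_pos.2 (mul_pos hm0 (Real.exp_pos _)))
      (Real.sqrt_le_sqrt (hlow p))
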